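/- Let A = [[A_ff, A_fc],[A_cf, A_cc]] be an invertible matrix on F ⊕ C with A_ff invertible, let P = [[W],[I]] and R = [Z, I], set δ_P = A_ff·W + A_fc, δ_R = Z·A_ff + A_cf, K = R·A·P. Suppose P satisfies the weak approximation property with respect to AᵀA with constant C_P, set C_W = sqrt(C_P·(1 + ‖W‖²)/‖AᵀA‖), and assume C_W·‖δ_R‖ < 1 (so K is invertible). Then for every F×F matrix Δ_F, with δ_F = I − Δ_F·A_ff, δ̂_F = I − A_ff·Δ_F, G = δ_F + Δ_F·δ_P·K⁻¹·δ_R, and G_pre = δ̂_F + δ_P·K⁻¹·δ_R·Δ_F, one has ‖G‖ ≤ ‖δ_F‖ + (1 + ‖δ_F‖)·C_W·‖δ_R‖/(1 − C_W·‖δ_R‖) and ‖G_pre‖ ≤ ‖δ̂_F‖ + ‖Δ_F‖·‖A_ff‖·C_W·‖δ_R‖/(1 − C_W·‖δ_R‖). -/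

import Mathlib

open Matrix
open scoped Matrix.Norms.L2Operator

/-- The Euclidean (ℓ²) norm of a finitely-supported real vector. -/
noncomputable def euclNorm {ι : Type*} [Fintype ι] (v : ι → ℝ) : ℝ :=
  ‖(WithLp.equiv 2 (ι → ℝ)).symm v‖

section Aux
variable {ι κ m n : Type*} [Fintype ι] [Fintype κ] [Fintype m] [Fintype n]

lemma euclNorm_nonneg (v : ι → ℝ) : 0 ≤ euclNorm v := norm_nonneg _

lemma euclNorm_sq_eq (v : ι → ℝ) : euclNorm v ^ 2 = ∑ i, v i ^ 2 := by
  have h : euclNorm v = Real.sqrt (∑ i, v i ^ 2) := by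
    simp [euclNorm, EuclideanSpace.norm_eq, Real.norm_eq_abs, sq_abs]
  rw [h, Real.sq_sqrt (Finset.sum_nonneg fun i _ => sq_nonneg _)]

lemma euclNorm_sum_elim_sq (a : ι → ℝ) (b : κ → ℝ) :
    euclNorm (Sum.elim a b) ^ 2 = euclNorm a ^ 2 + euclNorm b ^ 2 := by
  simp [euclNorm_sq_eq, Fintype.sum_sum_type]

lemma euclNorm_sub_le (x y : ι → ℝ) : euclNorm (x - y) ≤ euclNorm x + euclNorm y :=
  norm_sub_le ((WithLp.equiv 2 (ι → ℝ)).symm x) ((WithLp.equiv 2 (ι → ℝ)).symm y)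

variable [DecidableEq n]

lemma euclNorm_mulVec_le (M : Matrix m n ℝ) (x : n → ℝ) :
    euclNorm (M *ᵥ x) ≤ ‖M‖ * euclNorm x :=
  M.l2_opNorm_mulVec ((WithLp.equiv 2 (n → ℝ)).symm x)

lemma matrix_norm_le (M : Matrix m n ℝ) {c : ℝ} (hc : 0 ≤ c)
    (h : ∀ x : n → ℝ, euclNorm (M *ᵥ x) ≤ c * euclNorm x) : ‖M‖ ≤ c := by
  rw [Matrix.l2_opNorm_def]
  refine ContinuousLinearMap.opNorm_le_bound _ hc fun x => ?_
  exact h ((WithLp.equiv 2 (n → ℝ)) x)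

lemma matrix_norm_one_le : ‖(1 : Matrix n n ℝ)‖ ≤ 1 :=
  matrix_norm_le _ zero_le_one fun x => by simp [Matrix.one_mulVec]

lemma inv_one_add (B : Matrix n n ℝ) (hB : ‖B‖ < 1) :
    IsUnit (1 + B) ∧ ‖(1 + B)⁻¹‖ ≤ (1 - ‖B‖)⁻¹ := by
  letI : CompleteSpace (Matrix n n ℝ) := FiniteDimensional.complete ℝ _
  set u := Units.oneSub (-B) (by simpa using hB) with hu_def
  set y : Matrix n n ℝ := ((u⁻¹ : (Matrix n n ℝ)ˣ) : Matrix n n ℝ) with hy_def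
  have hu : (↑u : Matrix n n ℝ) = 1 + B := by
    simp [hu_def, Units.oneSub, sub_neg_eq_add]
  have hmul : (1 + B) * y = 1 := by rw [← hu]; exact u.mul_inv
  have hinv : (1 + B)⁻¹ = y := Matrix.inv_eq_right_inv hmul
  refine ⟨hu ▸ u.isUnit, ?_⟩
  have hid : y = 1 - B * y := by
    have h2 : y + B * y = 1 := by
      calc y + B * y = (1 + B) * y := by rw [Matrix.add_mul, Matrix.one_mul]
      _ = 1 := hmul
    rw [← h2]; abel
  have h1 : ‖y‖ ≤ 1 + ‖B‖ * ‖y‖ := by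
    calc ‖y‖ = ‖1 - B * y‖ := by rw [← hid]
    _ ≤ ‖(1 : Matrix n n ℝ)‖ + ‖B * y‖ := norm_sub_le _ _
    _ ≤ 1 + ‖B‖ * ‖y‖ := add_le_add matrix_norm_one_le (Matrix.l2_opNorm_mul _ _)
  rw [hinv, inv_eq_one_div, le_div_iff₀ (by linarith)]
  nlinarith [norm_nonneg y]

end Aux

set_option maxHeartbeats 1000000 in
/-- **Theorem 3.4.** If `P` satisfies the WAP with respect to `AᵀA` with constant `C_P` and
`C_W·‖δ_R‖ < 1`, then for any `Δ_F`,
`‖G‖ ≤ ‖δ_F‖ + (1 + ‖δ_F‖)·C_W‖δ_R‖/(1 − C_W‖δ_R‖)` and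
`‖G_pre‖ ≤ ‖δ̂_F‖ + ‖Δ_F‖·‖A_ff‖·C_W‖δ_R‖/(1 − C_W‖δ_R‖)`. -/
theorem wap_on_P_G_bounds
    {F C : Type*} [Fintype F] [Fintype C] [DecidableEq F] [DecidableEq C]
    (Aff : Matrix F F ℝ) (Afc : Matrix F C ℝ) (Acf : Matrix C F ℝ) (Acc : Matrix C C ℝ)
    (W : Matrix F C ℝ) (Z : Matrix C F ℝ)
    (A : Matrix (F ⊕ C) (F ⊕ C) ℝ) (hA : A = fromBlocks Aff Afc Acf Acc)
    (hAinv : IsUnit A) (hAff : IsUnit Aff)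
    (P : Matrix (F ⊕ C) C ℝ) (hP : P = fromRows W 1)
    (R : Matrix C (F ⊕ C) ℝ) (hR : R = fromCols Z 1)
    (K : Matrix C C ℝ) (hK : K = R * A * P)
    (δP : Matrix F C ℝ) (hδP : δP = Aff * W + Afc)
    (δR : Matrix C F ℝ) (hδR : δR = Z * Aff + Acf)
    (CP : ℝ)
    (hWAP : ∀ v : (F ⊕ C) → ℝ, ∃ wc : C → ℝ,
      euclNorm (v - P *ᵥ wc) ^ 2 ≤ (CP / ‖Aᵀ * A‖) * euclNorm (A *ᵥ v) ^ 2)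
    (CW : ℝ) (hCW : CW = Real.sqrt (CP * (1 + ‖W‖ ^ 2) / ‖Aᵀ * A‖))
    (hsmall : CW * ‖δR‖ < 1) :
    ∀ ΔF : Matrix F F ℝ, ∀ δF δFhat G Gpre : Matrix F F ℝ,
      δF = 1 - ΔF * Aff → δFhat = 1 - Aff * ΔF →
      G = δF + ΔF * δP * K⁻¹ * δR → Gpre = δFhat + δP * K⁻¹ * δR * ΔF →
      ‖G‖ ≤ ‖δF‖ + (1 + ‖δF‖) * (CW * ‖δR‖) / (1 - CW * ‖δR‖) ∧
      ‖Gpre‖ ≤ ‖δFhat‖ + ‖ΔF‖ * ‖Aff‖ * (CW * ‖δR‖) / (1 - CW * ‖δR‖) := by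
  intro ΔF δF δFhat G Gpre hδF hδFhat hG hGpre
  have hCW0 : 0 ≤ CW := by rw [hCW]; exact Real.sqrt_nonneg _
  have ht0 : 0 ≤ CW * ‖δR‖ := mul_nonneg hCW0 (norm_nonneg _)
  have h1t : 0 < 1 - CW * ‖δR‖ := by linarith
  obtain ⟨iAff⟩ := hAff.nonempty_invertible
  have hAffinv : Aff⁻¹ = ⅟Aff := (Matrix.invOf_eq_nonsing_inv Aff).symm
  have hAffmul : Aff * Aff⁻¹ = 1 := by rw [hAffinv]; exact mul_invOf_self Aff
  have hAffmul' : Aff⁻¹ * Aff = 1 := by rw [hAffinv]; exact invOf_mul_self Aff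
  set S : Matrix C C ℝ := Acc - Acf * Aff⁻¹ * Afc with hS
  have hSunit : IsUnit S := by
    have h := (Matrix.isUnit_fromBlocks_iff_of_invertible₁₁
      (A := Aff) (B := Afc) (C := Acf) (D := Acc)).mp (hA ▸ hAinv)
    rwa [← hAffinv] at h
  have hSdet : IsUnit S.det := (Matrix.isUnit_iff_isUnit_det S).mp hSunit
  have hSS : S * S⁻¹ = 1 := Matrix.mul_nonsing_inv S hSdet
  have hSS' : S⁻¹ * S = 1 := Matrix.nonsing_inv_mul S hSdet
  set M : Matrix F C ℝ := Aff⁻¹ * δP * S⁻¹ with hM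
  -- the crucial norm bound on M
  have hMnorm : ‖M‖ ≤ CW := by
    apply matrix_norm_le _ hCW0
    intro xc
    set vc : C → ℝ := S⁻¹ *ᵥ xc with hvc
    set vf : F → ℝ := -((Aff⁻¹ * Afc) *ᵥ vc) with hvf
    set v : F ⊕ C → ℝ := Sum.elim vf vc with hv
    have hblock1 : Aff *ᵥ vf + Afc *ᵥ vc = 0 := by
      rw [hvf, Matrix.mulVec_neg, Matrix.mulVec_mulVec, ← Matrix.mul_assoc, hAffmul,
        Matrix.one_mul]
      simp
    have hblock2 : Acf *ᵥ vf + Acc *ᵥ vc = xc := by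
      rw [hvf, Matrix.mulVec_neg, Matrix.mulVec_mulVec, ← Matrix.mul_assoc,
        neg_add_eq_sub, ← Matrix.sub_mulVec]
      have hh : Acc - Acf * Aff⁻¹ * Afc = S := rfl
      rw [hh, hvc, Matrix.mulVec_mulVec, hSS, Matrix.one_mulVec]
    have hAv : A *ᵥ v = Sum.elim (0 : F → ℝ) xc := by
      rw [hA, hv, Matrix.fromBlocks_mulVec, Sum.elim_comp_inl, Sum.elim_comp_inr,
        hblock1, hblock2]
    obtain ⟨wc, hwc⟩ := hWAP v
    have hMxc : M *ᵥ xc = W *ᵥ (vc - wc) - (vf - W *ᵥ wc) := by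
      have hAd : Aff⁻¹ * δP = W + Aff⁻¹ * Afc := by
        rw [hδP, Matrix.mul_add, ← Matrix.mul_assoc, hAffmul', Matrix.one_mul]
      have h1 : M *ᵥ xc = (W + Aff⁻¹ * Afc) *ᵥ vc := by
        rw [hM, ← Matrix.mulVec_mulVec, ← hvc, ← hAd]
      rw [h1, Matrix.add_mulVec, Matrix.mulVec_sub]
      rw [show (Aff⁻¹ * Afc) *ᵥ vc = -vf from by rw [hvf, neg_neg]]
      abel
    have hres : v - P *ᵥ wc = Sum.elim (vf - W *ᵥ wc) (vc - wc) := by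
      rw [hP, Matrix.fromRows_mulVec, Matrix.one_mulVec, hv]
      ext (i | i) <;> simp
    have ha0 : 0 ≤ euclNorm (vc - wc) := euclNorm_nonneg _
    have hb0 : 0 ≤ euclNorm (vf - W *ᵥ wc) := euclNorm_nonneg _
    have h2 : euclNorm (M *ᵥ xc) ≤ ‖W‖ * euclNorm (vc - wc) + euclNorm (vf - W *ᵥ wc) := by
      rw [hMxc]
      exact le_trans (euclNorm_sub_le _ _) (add_le_add_left (euclNorm_mulVec_le _ _) _)
    refine le_trans h2 ?_
    -- square comparison
    have hres2 : euclNorm (vf - W *ᵥ wc) ^ 2 + euclNorm (vc - wc) ^ 2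
        ≤ (CP / ‖Aᵀ * A‖) * euclNorm xc ^ 2 := by
      have h3 := hwc
      rw [hres, euclNorm_sum_elim_sq, hAv, euclNorm_sum_elim_sq] at h3
      have h0 : euclNorm (0 : F → ℝ) ^ 2 = 0 := by
        rw [euclNorm_sq_eq]; simp
      rw [h0, zero_add] at h3
      exact h3
    have hsq : (‖W‖ * euclNorm (vc - wc) + euclNorm (vf - W *ᵥ wc)) ^ 2
        ≤ (CW * euclNorm xc) ^ 2 := by
      rcases le_or_gt 0 (CP / ‖Aᵀ * A‖) with h4 | h4
      · have hCW2 : CW ^ 2 = (CP / ‖Aᵀ * A‖) * (1 + ‖W‖ ^ 2) := by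
          rw [hCW, show CP * (1 + ‖W‖ ^ 2) / ‖Aᵀ * A‖ = (CP / ‖Aᵀ * A‖) * (1 + ‖W‖ ^ 2) from
            by ring, Real.sq_sqrt (by positivity)]
        nlinarith [sq_nonneg (‖W‖ * euclNorm (vf - W *ᵥ wc) - euclNorm (vc - wc)),
          sq_nonneg (euclNorm xc), norm_nonneg W, sq_nonneg ‖W‖]
      · have h5 : (CP / ‖Aᵀ * A‖) * euclNorm xc ^ 2 ≤ 0 :=
          mul_nonpos_of_nonpos_of_nonneg h4.le (sq_nonneg _)
        have h6 : euclNorm (vc - wc) = 0 := by nlinarith [sq_nonneg (euclNorm (vf - W *ᵥ wc))]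
        have h7 : euclNorm (vf - W *ᵥ wc) = 0 := by nlinarith [sq_nonneg (euclNorm (vc - wc))]
        rw [h6, h7]
        simp
        positivity
    have hX0 : 0 ≤ ‖W‖ * euclNorm (vc - wc) + euclNorm (vf - W *ᵥ wc) :=
      add_nonneg (mul_nonneg (norm_nonneg _) ha0) hb0
    have hY0 : 0 ≤ CW * euclNorm xc := mul_nonneg hCW0 (euclNorm_nonneg _)
    calc ‖W‖ * euclNorm (vc - wc) + euclNorm (vf - W *ᵥ wc)
        = Real.sqrt ((‖W‖ * euclNorm (vc - wc) + euclNorm (vf - W *ᵥ wc)) ^ 2) :=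
          (Real.sqrt_sq hX0).symm
      _ ≤ Real.sqrt ((CW * euclNorm xc) ^ 2) := Real.sqrt_le_sqrt hsq
      _ = CW * euclNorm xc := Real.sqrt_sq hY0
  -- invertibility of T = 1 + δR * M
  have hBnorm : ‖δR * M‖ ≤ CW * ‖δR‖ := by
    calc ‖δR * M‖ ≤ ‖δR‖ * ‖M‖ := Matrix.l2_opNorm_mul _ _
    _ ≤ ‖δR‖ * CW := mul_le_mul_of_nonneg_left hMnorm (norm_nonneg _)
    _ = CW * ‖δR‖ := mul_comm _ _
  obtain ⟨hTunit, hTinv_le⟩ := inv_one_add (δR * M) (lt_of_le_of_lt hBnorm hsmall)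
  set T : Matrix C C ℝ := 1 + δR * M with hT
  have hTb : ‖T⁻¹‖ ≤ (1 - CW * ‖δR‖)⁻¹ := by
    refine le_trans hTinv_le ?_
    exact inv_anti₀ h1t (by linarith)
  have hTdet : IsUnit T.det := (Matrix.isUnit_iff_isUnit_det T).mp hTunit
  have hTT : T * T⁻¹ = 1 := Matrix.mul_nonsing_inv T hTdet
  -- factorization K = T * S
  have hMS : M * S = Aff⁻¹ * δP := by rw [hM, Matrix.mul_assoc, hSS', Matrix.mul_one]
  have hKfact : K = T * S := by
    have e1 : K = (Z * Aff + Acf) * W + (Z * Afc + Acc) := by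
      rw [hK, hA, hR, hP, Matrix.fromCols_mul_fromBlocks, Matrix.fromCols_mul_fromRows]
      simp [Matrix.one_mul, Matrix.mul_one]
    have k1 : Aff⁻¹ * (Aff * W + Afc) = W + Aff⁻¹ * Afc := by
      rw [Matrix.mul_add, ← Matrix.mul_assoc, hAffmul', Matrix.one_mul]
    have k2 : Aff * (Aff⁻¹ * Afc) = Afc := by
      rw [← Matrix.mul_assoc, hAffmul, Matrix.one_mul]
    have e2 : T * S = (Z * Aff + Acf) * W + (Z * Afc + Acc) := by
      rw [hT, Matrix.add_mul, Matrix.one_mul, Matrix.mul_assoc δR M S, hMS, hδR, hδP, hS]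
      rw [k1]
      simp only [Matrix.add_mul, Matrix.mul_add, Matrix.mul_assoc, k2]
      abel
    rw [e1, e2]
  have hKinv : K⁻¹ = S⁻¹ * T⁻¹ := by
    apply Matrix.inv_eq_right_inv
    rw [hKfact, Matrix.mul_assoc, ← Matrix.mul_assoc S S⁻¹ T⁻¹, hSS, Matrix.one_mul, hTT]
  -- the product δP * K⁻¹ = Aff * (M * T⁻¹)
  have key : δP * K⁻¹ = Aff * (M * T⁻¹) := by
    rw [hKinv, hM]
    simp only [← Matrix.mul_assoc]
    rw [show Aff * Aff⁻¹ * δP = δP from by rw [hAffmul, Matrix.one_mul]]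
  have hXnorm : ‖M * T⁻¹‖ ≤ CW * (1 - CW * ‖δR‖)⁻¹ := by
    calc ‖M * T⁻¹‖ ≤ ‖M‖ * ‖T⁻¹‖ := Matrix.l2_opNorm_mul _ _
    _ ≤ CW * (1 - CW * ‖δR‖)⁻¹ := mul_le_mul hMnorm hTb (norm_nonneg _) hCW0
  have hXnorm0 : 0 ≤ CW * (1 - CW * ‖δR‖)⁻¹ := mul_nonneg hCW0 (by positivity)
  constructor
  · -- G bound
    have e : G = δF + (1 - δF) * ((M * T⁻¹) * δR) := by
      rw [hG]
      congr 1
      have h8 : (1 : Matrix F F ℝ) - δF = ΔF * Aff := by rw [hδF, sub_sub_cancel]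
      rw [h8]
      calc ΔF * δP * K⁻¹ * δR = ΔF * (δP * K⁻¹) * δR := by
            rw [Matrix.mul_assoc ΔF δP K⁻¹]
        _ = ΔF * Aff * (M * T⁻¹ * δR) := by
            rw [key]
            simp only [Matrix.mul_assoc]
    have n1 : ‖(1 : Matrix F F ℝ) - δF‖ ≤ 1 + ‖δF‖ :=
      le_trans (norm_sub_le _ _) (add_le_add_left matrix_norm_one_le _)
    calc ‖G‖ ≤ ‖δF‖ + ‖(1 - δF) * ((M * T⁻¹) * δR)‖ := by rw [e]; exact norm_add_le _ _
      _ ≤ ‖δF‖ + ‖(1 : Matrix F F ℝ) - δF‖ * (‖M * T⁻¹‖ * ‖δR‖) := by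
          refine add_le_add_right ?_ _
          refine le_trans (Matrix.l2_opNorm_mul _ _) ?_
          exact mul_le_mul_of_nonneg_left (Matrix.l2_opNorm_mul _ _) (norm_nonneg _)
      _ ≤ ‖δF‖ + (1 + ‖δF‖) * ((CW * (1 - CW * ‖δR‖)⁻¹) * ‖δR‖) := by
          refine add_le_add_right ?_ _
          refine mul_le_mul n1 (mul_le_mul_of_nonneg_right hXnorm (norm_nonneg _))
            (mul_nonneg (norm_nonneg _) (norm_nonneg _)) (by positivity)
      _ = ‖δF‖ + (1 + ‖δF‖) * (CW * ‖δR‖) / (1 - CW * ‖δR‖) := by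
          rw [div_eq_mul_inv]
          ring
  · -- Gpre bound
    have e : Gpre = δFhat + Aff * ((M * T⁻¹) * (δR * ΔF)) := by
      rw [hGpre]
      congr 1
      rw [show δP * K⁻¹ * δR * ΔF = (δP * K⁻¹) * (δR * ΔF) from by
        simp only [Matrix.mul_assoc], key]
      simp only [Matrix.mul_assoc]
    calc ‖Gpre‖ ≤ ‖δFhat‖ + ‖Aff * ((M * T⁻¹) * (δR * ΔF))‖ := by rw [e]; exact norm_add_le _ _
      _ ≤ ‖δFhat‖ + ‖Aff‖ * (‖M * T⁻¹‖ * (‖δR‖ * ‖ΔF‖)) := by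
          refine add_le_add_right ?_ _
          refine le_trans (Matrix.l2_opNorm_mul _ _) ?_
          refine mul_le_mul_of_nonneg_left ?_ (norm_nonneg _)
          refine le_trans (Matrix.l2_opNorm_mul _ _) ?_
          exact mul_le_mul_of_nonneg_left (Matrix.l2_opNorm_mul _ _) (norm_nonneg _)
      _ ≤ ‖δFhat‖ + ‖Aff‖ * ((CW * (1 - CW * ‖δR‖)⁻¹) * (‖δR‖ * ‖ΔF‖)) := by
          refine add_le_add_right ?_ _
          refine mul_le_mul_of_nonneg_left ?_ (norm_nonneg _)
          exact mul_le_mul_of_nonneg_right hXnorm (mul_nonneg (norm_nonneg _) (norm_nonneg _))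
      _ = ‖δFhat‖ + ‖ΔF‖ * ‖Aff‖ * (CW * ‖δR‖) / (1 - CW * ‖δR‖) := by
          rw [div_eq_mul_inv]
          ring
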